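/- Let q₁=(1,0,0), q₂=(1,1,0), q₃=(0,1,0), q₄=(0,1,1), q₅=(1,0,1), q₆=(0,0,1) in ℝ³. Then the intersection of the eight cones cone{q₃,q₅,q₆}, cone{q₃,q₄,q₅}, cone{q₂,q₅,q₆}, cone{q₁,q₂,q₆}, cone{q₁,q₃,q₄}, cone{q₁,q₂,q₄}, cone{q₁,q₃,q₆}, cone{q₂,q₄,q₅} equals the ray {t·(1,1,1) : t ∈ ℝ, t ≥ 0}. (This intersection is the nef cone of the non-projective ℚ-factorial small resolution X₇; it is not full-dimensional.) -/

import Mathlib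

def coneGen (S : Set (Fin 3 → ℝ)) : Set (Fin 3 → ℝ) :=
  {x | ∃ (n : ℕ) (c : Fin n → ℝ) (v : Fin n → (Fin 3 → ℝ)),
      (∀ i, 0 ≤ c i) ∧ (∀ i, v i ∈ S) ∧ x = ∑ i, c i • v i}

def q1 : Fin 3 → ℝ := ![1, 0, 0]
def q2 : Fin 3 → ℝ := ![1, 1, 0]
def q3 : Fin 3 → ℝ := ![0, 1, 0]
def q4 : Fin 3 → ℝ := ![0, 1, 1]
def q5 : Fin 3 → ℝ := ![1, 0, 1]
def q6 : Fin 3 → ℝ := ![0, 0, 1]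

lemma cone_ineq {S : Set (Fin 3 → ℝ)} {x : Fin 3 → ℝ} (hx : x ∈ coneGen S)
    (p q r : ℝ) (h : ∀ v ∈ S, 0 ≤ p * v 0 + q * v 1 + r * v 2) :
    0 ≤ p * x 0 + q * x 1 + r * x 2 := by
  obtain ⟨n, c, v, hc, hv, rfl⟩ := hx
  have hj : ∀ j, (∑ i, c i • v i) j = ∑ i, c i * v i j := by
    intro j; simp [Finset.sum_apply]
  rw [hj 0, hj 1, hj 2, Finset.mul_sum, Finset.mul_sum, Finset.mul_sum,
    ← Finset.sum_add_distrib, ← Finset.sum_add_distrib]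
  apply Finset.sum_nonneg
  intro i _
  have h1 := h (v i) (hv i)
  have h2 := hc i
  nlinarith

lemma mem2 {S : Set (Fin 3 → ℝ)} {u w : Fin 3 → ℝ} (hu : u ∈ S) (hw : w ∈ S)
    {s t : ℝ} (hs : 0 ≤ s) (ht : 0 ≤ t) : s • u + t • w ∈ coneGen S := by
  refine ⟨2, ![s, t], ![u, w], ?_, ?_, ?_⟩
  · intro i; fin_cases i <;> simpa
  · intro i; fin_cases i <;> simpa
  · simp [Fin.sum_univ_two]

lemma mem3 {S : Set (Fin 3 → ℝ)} {u w z : Fin 3 → ℝ} (hu : u ∈ S) (hw : w ∈ S)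
    (hz : z ∈ S) {s t r : ℝ} (hs : 0 ≤ s) (ht : 0 ≤ t) (hr : 0 ≤ r) :
    s • u + t • w + r • z ∈ coneGen S := by
  refine ⟨3, ![s, t, r], ![u, w, z], ?_, ?_, ?_⟩
  · intro i; fin_cases i <;> simpa
  · intro i; fin_cases i <;> simpa
  · simp [Fin.sum_univ_three]

theorem stmt13 :
    coneGen {q3, q5, q6} ∩ coneGen {q3, q4, q5} ∩ coneGen {q2, q5, q6} ∩
      coneGen {q1, q2, q6} ∩ coneGen {q1, q3, q4} ∩ coneGen {q1, q2, q4} ∩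
      coneGen {q1, q3, q6} ∩ coneGen {q2, q4, q5} =
    {x : Fin 3 → ℝ | ∃ t : ℝ, 0 ≤ t ∧ x = t • ![1, 1, 1]} := by
  ext x
  constructor
  · rintro ⟨⟨⟨⟨⟨⟨⟨h1, h2⟩, h3⟩, h4⟩, h5⟩, h6⟩, h7⟩, h8⟩
    -- From cone {q3,q5,q6}: x 2 ≥ x 0 and x 0 ≥ 0
    have i1 : 0 ≤ (-1) * x 0 + 0 * x 1 + 1 * x 2 := by
      apply cone_ineq h1
      intro v hv
      simp only [Set.mem_insert_iff, Set.mem_singleton_iff] at hv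
      rcases hv with rfl | rfl | rfl <;> norm_num [q3, q5, q6, Matrix.cons_val_two, Matrix.tail_cons, Matrix.head_cons]
    have i2 : 0 ≤ 1 * x 0 + 0 * x 1 + 0 * x 2 := by
      apply cone_ineq h1
      intro v hv
      simp only [Set.mem_insert_iff, Set.mem_singleton_iff] at hv
      rcases hv with rfl | rfl | rfl <;> norm_num [q3, q5, q6]
    -- From cone {q2,q5,q6}: x 0 ≥ x 1
    have i3 : 0 ≤ 1 * x 0 + (-1) * x 1 + 0 * x 2 := by
      apply cone_ineq h3
      intro v hv
      simp only [Set.mem_insert_iff, Set.mem_singleton_iff] at hv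
      rcases hv with rfl | rfl | rfl <;> norm_num [q2, q5, q6]
    -- From cone {q1,q3,q4}: x 1 ≥ x 2
    have i4 : 0 ≤ 0 * x 0 + 1 * x 1 + (-1) * x 2 := by
      apply cone_ineq h5
      intro v hv
      simp only [Set.mem_insert_iff, Set.mem_singleton_iff] at hv
      rcases hv with rfl | rfl | rfl <;> norm_num [q1, q3, q4, Matrix.cons_val_two, Matrix.tail_cons, Matrix.head_cons]
    refine ⟨x 0, by linarith, ?_⟩
    funext j
    fin_cases j <;> simp <;> linarith
  · rintro ⟨t, ht, rfl⟩
    have key : ∀ u w : Fin 3 → ℝ, u + w = ![1, 1, 1] →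
        t • ![(1:ℝ), 1, 1] = t • u + t • w := by
      intro u w h; rw [← smul_add, h]
    refine ⟨⟨⟨⟨⟨⟨⟨?_, ?_⟩, ?_⟩, ?_⟩, ?_⟩, ?_⟩, ?_⟩, ?_⟩
    · rw [key q3 q5 (by funext j; fin_cases j <;> norm_num [q3, q5])]
      exact mem2 (by simp) (by simp) ht ht
    · rw [key q3 q5 (by funext j; fin_cases j <;> norm_num [q3, q5])]
      exact mem2 (by simp) (by simp) ht ht
    · rw [key q2 q6 (by funext j; fin_cases j <;> norm_num [q2, q6])]
      exact mem2 (by simp) (by simp) ht ht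
    · rw [key q2 q6 (by funext j; fin_cases j <;> norm_num [q2, q6])]
      exact mem2 (by simp) (by simp) ht ht
    · rw [key q1 q4 (by funext j; fin_cases j <;> norm_num [q1, q4])]
      exact mem2 (by simp) (by simp) ht ht
    · rw [key q1 q4 (by funext j; fin_cases j <;> norm_num [q1, q4])]
      exact mem2 (by simp) (by simp) ht ht
    · have : t • ![(1:ℝ), 1, 1] = t • q1 + t • q3 + t • q6 := by
        rw [← smul_add, ← smul_add]
        congr 1
        funext j; fin_cases j <;> norm_num [q1, q3, q6]
      rw [this]
      exact mem3 (by simp) (by simp) (by simp) ht ht ht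
    · have : t • ![(1:ℝ), 1, 1] = (t/2) • q2 + (t/2) • q4 + (t/2) • q5 := by
        rw [← smul_add, ← smul_add]
        funext j; fin_cases j <;> simp [q2, q4, q5] <;> ring
      rw [this]
      exact mem3 (by simp) (by simp) (by simp) (by linarith) (by linarith) (by linarith)
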